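/- Let f : X × U → R^n be continuously differentiable with X ⊆ R^n, U ⊆ R^m open, and suppose the Kamke condition holds: for all ξ1 ⪰ ξ2 in X (componentwise), u1 ⪰ u2 in U (componentwise), and any index i with ξ1_i = ξ2_i, one has f_i(ξ1, u1) ≥ f_i(ξ2, u2). Then ∂f_i/∂x_j(x,u) ≥ 0 for all x ∈ X, u ∈ U, i ≠ j, and ∂f_i/∂u_j(x,u) ≥ 0 for all x, u, i, j. -/

import Mathlib

lemma aux_deriv_nonneg {n m : ℕ}
    (X : Set (Fin n → ℝ)) (U : Set (Fin m → ℝ))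
    (hXo : IsOpen X) (hUo : IsOpen U)
    (f : (Fin n → ℝ) × (Fin m → ℝ) → Fin n → ℝ)
    (hf : ContDiffOn ℝ 1 f (X ×ˢ U))
    (p : (Fin n → ℝ) × (Fin m → ℝ)) (hp : p ∈ X ×ˢ U)
    (w : (Fin n → ℝ) × (Fin m → ℝ)) (i : Fin n)
    (hmono : ∀ t : ℝ, 0 < t → p + t • w ∈ X ×ˢ U → f p i ≤ f (p + t • w) i) :
    0 ≤ fderiv ℝ f p w i := by
  have hmem : X ×ˢ U ∈ nhds p := (hXo.prod hUo).mem_nhds hp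
  have hdf : DifferentiableAt ℝ f p :=
    (hf.contDiffAt hmem).differentiableAt one_ne_zero
  set g : ℝ → ℝ := fun t => f (p + t • w) i with hgdef
  have hc : HasDerivAt (fun t : ℝ => p + t • w) w 0 := by
    simpa using ((hasDerivAt_id (0 : ℝ)).smul_const w).const_add p
  have h1 : HasDerivAt (fun t : ℝ => f (p + t • w)) (fderiv ℝ f p w) 0 := by
    have hfd := hdf.hasFDerivAt
    have hp0 : p = p + (0:ℝ) • w := by simp
    rw [hp0] at hfd
    have h1 := hfd.comp_hasDerivAt 0 hc
    rw [← hp0] at h1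
    exact h1
  have hg : HasDerivAt g (fderiv ℝ f p w i) 0 := by
    have := (ContinuousLinearMap.proj (R := ℝ) (φ := fun _ : Fin n => ℝ) i
      ).hasFDerivAt.comp_hasDerivAt 0 h1
    exact this
  have hnh : ∀ᶠ t in nhds (0 : ℝ), p + t • w ∈ X ×ˢ U := by
    have hcont : ContinuousAt (fun t : ℝ => p + t • w) 0 := hc.continuousAt
    exact hcont.preimage_mem_nhds (by simpa using hmem)
  have hev : ∀ᶠ t in nhdsWithin (0 : ℝ) (Set.Ioi 0), 0 ≤ slope g 0 t := by
    filter_upwards [nhdsWithin_le_nhds hnh, self_mem_nhdsWithin] with t ht ht0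
    rw [slope_def_field]
    apply div_nonneg
    · have := hmono t ht0 ht
      simp only [hgdef, zero_smul, add_zero]
      simpa using sub_nonneg.mpr this
    · simp only [sub_zero]
      exact le_of_lt ht0
  have hten : Filter.Tendsto (slope g 0) (nhdsWithin (0 : ℝ) (Set.Ioi 0))
      (nhds (fderiv ℝ f p w i)) := by
    have h' := (hg.hasDerivWithinAt (s := Set.Ioi 0))
    rw [hasDerivWithinAt_iff_tendsto_slope] at h'
    have : Set.Ioi (0 : ℝ) \ {0} = Set.Ioi 0 :=
      Set.diff_singleton_eq_self (by simp)
    rwa [this] at h'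
  exact ge_of_tendsto hten hev

theorem stmt_11 (n m : ℕ)
    (X : Set (Fin n → ℝ)) (U : Set (Fin m → ℝ))
    (hXo : IsOpen X) (hUo : IsOpen U)
    (f : (Fin n → ℝ) × (Fin m → ℝ) → Fin n → ℝ)
    (hf : ContDiffOn ℝ 1 f (X ×ˢ U))
    (hkamke : ∀ ξ₁ ∈ X, ∀ ξ₂ ∈ X, ∀ u₁ ∈ U, ∀ u₂ ∈ U,
      (∀ j, ξ₂ j ≤ ξ₁ j) → (∀ j, u₂ j ≤ u₁ j) →
      ∀ i : Fin n, ξ₁ i = ξ₂ i → f (ξ₂, u₂) i ≤ f (ξ₁, u₁) i) :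
    ∀ p ∈ X ×ˢ U,
      (∀ i j : Fin n, i ≠ j → 0 ≤ fderiv ℝ f p (Pi.single j 1, 0) i) ∧
      (∀ (i : Fin n) (j : Fin m), 0 ≤ fderiv ℝ f p (0, Pi.single j 1) i) := by
  intro p hp
  obtain ⟨hpX, hpU⟩ := hp
  constructor
  · intro i j hij
    have hv : ∀ k, (0:ℝ) ≤ (Pi.single j 1 : Fin n → ℝ) k := by
      intro k
      rcases eq_or_ne k j with h | h
      · subst h; simp
      · simp [Pi.single_apply, h]
    apply aux_deriv_nonneg X U hXo hUo f hf p ⟨hpX, hpU⟩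
    intro t ht hmem
    obtain ⟨h1, h2⟩ := hmem
    have hx1 : (p + t • (((Pi.single j 1, 0)) : (Fin n → ℝ) × (Fin m → ℝ))).1
        = p.1 + t • (Pi.single j 1 : Fin n → ℝ) := rfl
    have hx2 : (p + t • (((Pi.single j 1, 0)) : (Fin n → ℝ) × (Fin m → ℝ))).2 = p.2 := by
      show p.2 + t • (0 : Fin m → ℝ) = p.2
      simp
    rw [hx1] at h1; rw [hx2] at h2
    have key := hkamke (p.1 + t • (Pi.single j 1 : Fin n → ℝ)) h1 p.1 hpX p.2 h2 p.2 hpU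
      (fun k => by
        have := mul_nonneg (le_of_lt ht) (hv k)
        simp only [Pi.add_apply, Pi.smul_apply, smul_eq_mul, le_add_iff_nonneg_right]
        exact this)
      (fun k => le_refl _) i
      (by simp [Pi.single_apply, hij])
    have heq : f (p + t • (((Pi.single j 1, 0)) : (Fin n → ℝ) × (Fin m → ℝ))) i
        = f (p.1 + t • (Pi.single j 1 : Fin n → ℝ), p.2) i := by
      congr 1
      exact Prod.ext hx1 hx2
    rw [heq]
    exact key
  · intro i j
    have hv : ∀ k, (0:ℝ) ≤ (Pi.single j 1 : Fin m → ℝ) k := by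
      intro k
      rcases eq_or_ne k j with h | h
      · subst h; simp
      · simp [Pi.single_apply, h]
    apply aux_deriv_nonneg X U hXo hUo f hf p ⟨hpX, hpU⟩
    intro t ht hmem
    obtain ⟨h1, h2⟩ := hmem
    have hx1 : (p + t • (((0, Pi.single j 1)) : (Fin n → ℝ) × (Fin m → ℝ))).1 = p.1 := by
      show p.1 + t • (0 : Fin n → ℝ) = p.1
      simp
    have hx2 : (p + t • (((0, Pi.single j 1)) : (Fin n → ℝ) × (Fin m → ℝ))).2
        = p.2 + t • (Pi.single j 1 : Fin m → ℝ) := rfl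
    rw [hx1] at h1; rw [hx2] at h2
    have key := hkamke p.1 h1 p.1 hpX (p.2 + t • (Pi.single j 1 : Fin m → ℝ)) h2 p.2 hpU
      (fun k => le_refl _)
      (fun k => by
        have := mul_nonneg (le_of_lt ht) (hv k)
        simp only [Pi.add_apply, Pi.smul_apply, smul_eq_mul, le_add_iff_nonneg_right]
        exact this) i rfl
    have heq : f (p + t • (((0, Pi.single j 1)) : (Fin n → ℝ) × (Fin m → ℝ))) i
        = f (p.1, p.2 + t • (Pi.single j 1 : Fin m → ℝ)) i := by
      congr 1
      exact Prod.ext hx1 hx2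
    rw [heq]
    exact key
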